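/- Let G be a finitely generated, torsion-free, nilpotent group. If an element g ∈ G has only finitely many conjugates in G, then g lies in the center Z(G). Consequently, the elements of Z(G) are exactly the elements of G with finitely many conjugates. -/

import Mathlib

section Aux

variable {G : Type*} [Group G]

/-- If all commutators of `u` with elements of `G` lie in a normal subgroup `H`,
then the image of `u` in `G ⧸ H` is central. -/
private lemma mk_mem_center (H : Subgroup G) [H.Normal] {u : G}
    (h : ∀ z : G, u * z * u⁻¹ * z⁻¹ ∈ H) :
    (u : G ⧸ H) ∈ Subgroup.center (G ⧸ H) := by
  rw [Subgroup.mem_center_iff]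
  intro q
  induction q using QuotientGroup.induction_on with
  | H z =>
    have h1 : ((u * z * u⁻¹ * z⁻¹ : G) : G ⧸ H) = 1 := (QuotientGroup.eq_one_iff _).2 (h z)
    have h2 : (u : G ⧸ H) * z * (u : G ⧸ H)⁻¹ * (z : G ⧸ H)⁻¹ = 1 := by
      simpa using h1
    have := mul_eq_one_iff_eq_inv.1 h2
    calc (z : G ⧸ H) * u = ((z : G ⧸ H)⁻¹)⁻¹ * u := by rw [inv_inv]
      _ = ((u : G ⧸ H) * z * (u : G ⧸ H)⁻¹) * u := by rw [← this]
      _ = (u : G ⧸ H) * z := by group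

/-- If `a * y * a⁻¹ = v * y` with `v` central, then `aⁿ * y * a⁻ⁿ = vⁿ * y`. -/
private lemma conj_pow_eq {K : Type*} [Group K] {a y v : K}
    (hv : v ∈ Subgroup.center K) (h : a * y * a⁻¹ = v * y) :
    ∀ n : ℕ, a ^ n * y * (a ^ n)⁻¹ = v ^ n * y
  | 0 => by simp
  | n + 1 => by
    have hn := conj_pow_eq hv h n
    have hc : ∀ b : K, b * v ^ n = v ^ n * b := fun b =>
      Subgroup.mem_center_iff.1 (pow_mem hv n) b
    calc a ^ (n + 1) * y * (a ^ (n + 1))⁻¹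
        = a * (a ^ n * y * (a ^ n)⁻¹) * a⁻¹ := by rw [pow_succ']; group
      _ = a * (v ^ n * y) * a⁻¹ := by rw [hn]
      _ = v ^ n * (a * y * a⁻¹) := by rw [← mul_assoc, hc a]; group
      _ = v ^ n * (v * y) := by rw [h]
      _ = v ^ (n + 1) * y := by rw [pow_succ]; group

/-- The terms of the upper central series of a torsion-free group are isolated
one step at a time: if `u ∈ ζ_{i+1}` and `uⁿ ∈ ζ_i` (n > 0) then `u ∈ ζ_i`. -/
private lemma isolated (htf : ∀ g : G, g ≠ 1 → ¬IsOfFinOrder g) :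
    ∀ i : ℕ, ∀ u : G, ∀ n : ℕ, 0 < n → u ∈ Subgroup.upperCentralSeries G (i + 1) →
      u ^ n ∈ Subgroup.upperCentralSeries G i → u ∈ Subgroup.upperCentralSeries G i := by
  intro i
  induction i with
  | zero =>
    intro u n hn _ hun
    rw [upperCentralSeries_zero, Subgroup.mem_bot] at hun ⊢
    by_contra hne
    exact htf u hne (isOfFinOrder_iff_pow_eq_one.2 ⟨n, hn, hun⟩)
  | succ i ih =>
    intro u n hn hu hun
    rw [mem_upperCentralSeries_succ_iff]
    intro y
    set H := Subgroup.upperCentralSeries G i with hH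
    set v := u * y * u⁻¹ * y⁻¹ with hv
    have hv1 : v ∈ Subgroup.upperCentralSeries G (i + 1) :=
      mem_upperCentralSeries_succ_iff.1 hu y
    have hvn : v ^ n ∈ H := by
      have hvz : ((v : G) : G ⧸ H) ∈ Subgroup.center (G ⧸ H) :=
        mk_mem_center H (fun z => mem_upperCentralSeries_succ_iff.1 hv1 z)
      have hcu : (u : G ⧸ H) * y * (u : G ⧸ H)⁻¹ = (v : G ⧸ H) * y := by
        have : v * y = u * y * u⁻¹ := by rw [hv]; group
        calc (u : G ⧸ H) * y * (u : G ⧸ H)⁻¹ = ((u * y * u⁻¹ : G) : G ⧸ H) := rfl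
          _ = ((v * y : G) : G ⧸ H) := by rw [← this]
          _ = (v : G ⧸ H) * y := rfl
      have hpow := conj_pow_eq hvz hcu n
      -- u ^ n ∈ ζ (i+1) means its commutator with y is in H
      have hcomm : (u ^ n) * y * (u ^ n)⁻¹ * y⁻¹ ∈ H :=
        mem_upperCentralSeries_succ_iff.1 hun y
      have h1 : ((u ^ n * y * (u ^ n)⁻¹ * y⁻¹ : G) : G ⧸ H) = 1 :=
        (QuotientGroup.eq_one_iff _).2 hcomm
      have h2 : (u : G ⧸ H) ^ n * y * ((u : G ⧸ H) ^ n)⁻¹ * (y : G ⧸ H)⁻¹ = 1 := by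
        simpa using h1
      have h3 : (v : G ⧸ H) ^ n * y * (y : G ⧸ H)⁻¹ = 1 := by rw [← hpow]; exact h2
      have h4 : (v : G ⧸ H) ^ n = 1 := by simpa using h3
      have h5 : ((v ^ n : G) : G ⧸ H) = 1 := by rw [QuotientGroup.mk_pow]; exact h4
      exact (QuotientGroup.eq_one_iff _).1 h5
    exact ih v n hn hv1 hvn

/-- In a torsion-free nilpotent group, if `x ^ m` commutes with `g` (m > 0),
then `x` commutes with `g`. -/
private lemma commute_of_pow_commute [Group.IsNilpotent G]
    (htf : ∀ g : G, g ≠ 1 → ¬IsOfFinOrder g) {x g : G} {m : ℕ} (hm : 0 < m)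
    (h : x ^ m * g * (x ^ m)⁻¹ = g) : x * g = g * x := by
  set v := x * g * x⁻¹ * g⁻¹ with hv
  have key : ∀ i : ℕ, v ∈ Subgroup.upperCentralSeries G i → v ∈ Subgroup.upperCentralSeries G 0 := by
    intro i
    induction i with
    | zero => exact fun h => h
    | succ i ih =>
      intro hvi
      apply ih
      set H := Subgroup.upperCentralSeries G i with hH
      have hvm : v ^ m ∈ H := by
        have hvz : ((v : G) : G ⧸ H) ∈ Subgroup.center (G ⧸ H) :=
          mk_mem_center H (fun z => mem_upperCentralSeries_succ_iff.1 hvi z)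
        have hcu : (x : G ⧸ H) * g * (x : G ⧸ H)⁻¹ = (v : G ⧸ H) * g := by
          have : v * g = x * g * x⁻¹ := by rw [hv]; group
          calc (x : G ⧸ H) * g * (x : G ⧸ H)⁻¹ = ((x * g * x⁻¹ : G) : G ⧸ H) := rfl
            _ = ((v * g : G) : G ⧸ H) := by rw [← this]
            _ = (v : G ⧸ H) * g := rfl
        have hpow := conj_pow_eq hvz hcu m
        have h1 : ((x ^ m * g * (x ^ m)⁻¹ : G) : G ⧸ H) = ((g : G) : G ⧸ H) := by rw [h]
        have h2 : (x : G ⧸ H) ^ m * g * ((x : G ⧸ H) ^ m)⁻¹ = (g : G ⧸ H) := by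
          simpa using h1
        have h3 : (v : G ⧸ H) ^ m * g = (g : G ⧸ H) := by rw [← hpow]; exact h2
        have h4 : (v : G ⧸ H) ^ m = 1 :=
          mul_right_cancel (h3.trans (one_mul ((g : G) : G ⧸ H)).symm)
        have h5 : ((v ^ m : G) : G ⧸ H) = 1 := by rw [QuotientGroup.mk_pow]; exact h4
        exact (QuotientGroup.eq_one_iff _).1 h5
      exact isolated htf i v m hm hvi hvm
  obtain ⟨c, hc⟩ := Group.IsNilpotent.nilpotent G
  have hv0 : v ∈ Subgroup.upperCentralSeries G 0 := key c (by rw [hc]; trivial)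
  rw [upperCentralSeries_zero, Subgroup.mem_bot] at hv0
  have : x * g * x⁻¹ * g⁻¹ = 1 := hv0
  calc x * g = (x * g * x⁻¹ * g⁻¹) * (g * x) := by group
    _ = g * x := by rw [this, one_mul]

end Aux

/-- **Lemma 2.7(9).** In a finitely generated, torsion-free, nilpotent group,
the elements of the center are exactly the elements with only finitely many
conjugates. -/
theorem finite_conjugates_iff_central
    {G : Type*} [Group G] [Group.FG G] [Group.IsNilpotent G]
    (htf : ∀ g : G, g ≠ 1 → ¬IsOfFinOrder g) (g : G) :
    ({h : G | ∃ x : G, x⁻¹ * g * x = h}).Finite ↔ g ∈ Subgroup.center G := by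
  constructor
  · intro hfin
    rw [Subgroup.mem_center_iff]
    intro y
    -- pigeonhole: the conjugates of g by powers of y repeat
    have : Finite ({h : G | ∃ x : G, x⁻¹ * g * x = h}) := hfin.to_subtype
    obtain ⟨k, l, hkl, hfe⟩ := Finite.exists_ne_map_eq_of_infinite
      (fun k : ℕ => (⟨(y ^ k)⁻¹ * g * y ^ k, ⟨y ^ k, rfl⟩⟩ :
        {h : G | ∃ x : G, x⁻¹ * g * x = h}))
    have heq : (y ^ k)⁻¹ * g * y ^ k = (y ^ l)⁻¹ * g * y ^ l := by
      simpa using congrArg Subtype.val hfe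
    -- wlog k < l
    rcases hkl.lt_or_gt with hlt | hlt
    · have hm : 0 < l - k := Nat.sub_pos_of_lt hlt
      have hyl : y ^ l = y ^ (l - k) * y ^ k := by
        rw [← pow_add, Nat.sub_add_cancel hlt.le]
      have h1 : y ^ l * ((y ^ k)⁻¹ * g * y ^ k) * (y ^ l)⁻¹ = g := by rw [heq]; group
      rw [hyl] at h1
      have hkey : y ^ (l - k) * g * (y ^ (l - k))⁻¹ = g := by
        calc y ^ (l - k) * g * (y ^ (l - k))⁻¹
            = (y ^ (l - k) * y ^ k) * ((y ^ k)⁻¹ * g * y ^ k) * (y ^ (l - k) * y ^ k)⁻¹ := by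
              group
          _ = g := h1
      exact commute_of_pow_commute htf hm hkey
    · have hm : 0 < k - l := Nat.sub_pos_of_lt hlt
      have hyl : y ^ k = y ^ (k - l) * y ^ l := by
        rw [← pow_add, Nat.sub_add_cancel hlt.le]
      have h1 : y ^ k * ((y ^ l)⁻¹ * g * y ^ l) * (y ^ k)⁻¹ = g := by rw [← heq]; group
      rw [hyl] at h1
      have hkey : y ^ (k - l) * g * (y ^ (k - l))⁻¹ = g := by
        calc y ^ (k - l) * g * (y ^ (k - l))⁻¹
            = (y ^ (k - l) * y ^ l) * ((y ^ l)⁻¹ * g * y ^ l) * (y ^ (k - l) * y ^ l)⁻¹ := by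
              group
          _ = g := h1
      exact commute_of_pow_commute htf hm hkey
  · intro hg
    apply Set.Finite.subset (Set.finite_singleton g)
    rintro h ⟨x, rfl⟩
    have hx : x * g = g * x := Subgroup.mem_center_iff.1 hg x
    simp only [Set.mem_singleton_iff]
    calc x⁻¹ * g * x = x⁻¹ * (g * x) := by group
      _ = x⁻¹ * (x * g) := by rw [← hx]
      _ = g := by group
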